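/- For Boole's map T(x) = x - 1/x, the Lebesgue measure on ℝ is invariant: for every measurable set A ⊆ ℝ, the Lebesgue measure of T⁻¹(A) equals the Lebesgue measure of A. -/

import Mathlib

open MeasureTheory

noncomputable def boolePhiP (y : ℝ) : ℝ := (y + Real.sqrt (y ^ 2 + 4)) / 2
noncomputable def boolePhiM (y : ℝ) : ℝ := (y - Real.sqrt (y ^ 2 + 4)) / 2

noncomputable def booleDP (y : ℝ) : ℝ := (1 + y / Real.sqrt (y ^ 2 + 4)) / 2
noncomputable def booleDM (y : ℝ) : ℝ := (1 - y / Real.sqrt (y ^ 2 + 4)) / 2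

lemma boole_sqrt_pos (y : ℝ) : 0 < Real.sqrt (y ^ 2 + 4) :=
  Real.sqrt_pos.2 (by positivity)

lemma boole_sqrt_gt (y : ℝ) : |y| < Real.sqrt (y ^ 2 + 4) := by
  rw [show |y| = Real.sqrt (y ^ 2) by rw [Real.sqrt_sq_eq_abs]]
  exact Real.sqrt_lt_sqrt (by positivity) (by linarith)

lemma boole_sq (y : ℝ) : Real.sqrt (y ^ 2 + 4) ^ 2 = y ^ 2 + 4 :=
  Real.sq_sqrt (by positivity)

lemma boolePhiP_pos (y : ℝ) : 0 < boolePhiP y := by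
  have h := boole_sqrt_gt y
  have := neg_abs_le y
  unfold boolePhiP; linarith

lemma boolePhiM_neg (y : ℝ) : boolePhiM y < 0 := by
  have h := boole_sqrt_gt y
  have := le_abs_self y
  unfold boolePhiM; linarith

lemma boole_T_phiP (y : ℝ) : boolePhiP y - 1 / boolePhiP y = y := by
  have hp := boolePhiP_pos y
  have hsq := boole_sq y
  unfold boolePhiP at *
  have hne : y + Real.sqrt (y ^ 2 + 4) ≠ 0 := by linarith
  field_simp
  nlinarith

lemma boole_T_phiM (y : ℝ) : boolePhiM y - 1 / boolePhiM y = y := by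
  have hp := boolePhiM_neg y
  have hsq := boole_sq y
  unfold boolePhiM at *
  have hne : y - Real.sqrt (y ^ 2 + 4) ≠ 0 := by linarith
  field_simp
  nlinarith

lemma boole_hasDerivAt_P (y : ℝ) : HasDerivAt boolePhiP (booleDP y) y := by
  have h4 : (y ^ 2 + 4) ≠ 0 := by positivity
  have h1 : HasDerivAt (fun y : ℝ => y ^ 2 + 4) (2 * y) y := by
    simpa using (hasDerivAt_pow 2 y).add_const 4
  have h2 : HasDerivAt (fun y : ℝ => Real.sqrt (y ^ 2 + 4))
      (1 / (2 * Real.sqrt (y ^ 2 + 4)) * (2 * y)) y :=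
    (Real.hasDerivAt_sqrt h4).comp y h1
  have h3 := ((hasDerivAt_id y).add h2).div_const 2
  convert h3 using 1
  · rfl
  · rfl
  · rfl
  have hs := boole_sqrt_pos y
  unfold booleDP
  field_simp

lemma boole_hasDerivAt_M (y : ℝ) : HasDerivAt boolePhiM (booleDM y) y := by
  have h4 : (y ^ 2 + 4) ≠ 0 := by positivity
  have h1 : HasDerivAt (fun y : ℝ => y ^ 2 + 4) (2 * y) y := by
    simpa using (hasDerivAt_pow 2 y).add_const 4
  have h2 : HasDerivAt (fun y : ℝ => Real.sqrt (y ^ 2 + 4))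
      (1 / (2 * Real.sqrt (y ^ 2 + 4)) * (2 * y)) y :=
    (Real.hasDerivAt_sqrt h4).comp y h1
  have h3 := ((hasDerivAt_id y).sub h2).div_const 2
  convert h3 using 1
  · rfl
  · rfl
  · rfl
  have hs := boole_sqrt_pos y
  unfold booleDM
  field_simp

lemma booleDP_pos (y : ℝ) : 0 < booleDP y := by
  have hs := boole_sqrt_pos y
  have h := boole_sqrt_gt y
  have h2 : y / Real.sqrt (y ^ 2 + 4) > -1 := by
    rw [gt_iff_lt, neg_lt, ← neg_div, div_lt_one hs]
    calc -y ≤ |y| := neg_le_abs y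
    _ < _ := h
  unfold booleDP; linarith

lemma booleDM_pos (y : ℝ) : 0 < booleDM y := by
  have hs := boole_sqrt_pos y
  have h := boole_sqrt_gt y
  have h2 : y / Real.sqrt (y ^ 2 + 4) < 1 := by
    rw [div_lt_one hs]
    calc y ≤ |y| := le_abs_self y
    _ < _ := h
  unfold booleDM; linarith

lemma boolePhiP_inj : Function.Injective boolePhiP := by
  intro a b h
  have := boole_T_phiP a
  rw [h, boole_T_phiP b] at this
  exact this.symm

lemma boolePhiM_inj : Function.Injective boolePhiM := by
  intro a b h
  have := boole_T_phiM a
  rw [h, boole_T_phiM b] at this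
  exact this.symm

lemma boole_image_vol {φ d : ℝ → ℝ} (hd : ∀ y, HasDerivAt φ (d y) y)
    (hinj : Function.Injective φ) {A : Set ℝ} (hA : MeasurableSet A) :
    volume (φ '' A) = ∫⁻ y in A, ENNReal.ofReal |d y| := by
  have := lintegral_image_eq_lintegral_abs_det_fderiv_mul volume hA
    (f' := fun y => ContinuousLinearMap.smulRight (1 : ℝ →L[ℝ] ℝ) (d y))
    (fun x _ => (hd x).hasFDerivAt.hasFDerivWithinAt) (hinj.injOn) (fun _ => 1)
  simpa [MeasureTheory.setLIntegral_one, ContinuousLinearMap.det_smulRight] using this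

/-- Boole's map `T(x) = x - 1/x` preserves Lebesgue measure on `ℝ`:
for every measurable set `A`, the Lebesgue measure of `T⁻¹(A)` equals that of `A`. -/
theorem boole_measure_preserving (A : Set ℝ) (hA : MeasurableSet A) :
    volume ((fun x : ℝ => x - 1 / x) ⁻¹' A) = volume A := by
  set T : ℝ → ℝ := fun x => x - 1 / x with hT
  -- preimage minus {0} is the union of the two branch images
  have hset : T ⁻¹' A \ {0} = boolePhiP '' A ∪ boolePhiM '' A := by
    ext x
    simp only [Set.mem_diff, Set.mem_preimage, Set.mem_singleton_iff, Set.mem_union,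
      Set.mem_image]
    constructor
    · rintro ⟨hxA, hx0⟩
      obtain ⟨y, hyx, hxA⟩ : ∃ y, x - 1 / x = y ∧ y ∈ A := ⟨T x, rfl, hxA⟩
      have hx2 : x ^ 2 - y * x - 1 = 0 := by
        field_simp at hyx
        nlinarith [hyx]
      have hsq : (2 * x - y) ^ 2 = y ^ 2 + 4 := by nlinarith
      have : 2 * x - y = Real.sqrt (y ^ 2 + 4) ∨ 2 * x - y = -Real.sqrt (y ^ 2 + 4) := by
        have h2 := boole_sq y
        have h3 : (2 * x - y) ^ 2 = Real.sqrt (y ^ 2 + 4) ^ 2 := by rw [h2]; exact hsq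
        exact sq_eq_sq_iff_eq_or_eq_neg.1 h3
      rcases this with h | h
      · left; exact ⟨y, hxA, by unfold boolePhiP; linarith⟩
      · right; exact ⟨y, hxA, by unfold boolePhiM; linarith⟩
    · rintro (⟨y, hyA, rfl⟩ | ⟨y, hyA, rfl⟩)
      · exact ⟨by show T (boolePhiP y) ∈ A; simp only [hT]; rw [boole_T_phiP y]; exact hyA, ne_of_gt (boolePhiP_pos y)⟩
      · exact ⟨by show T (boolePhiM y) ∈ A; simp only [hT]; rw [boole_T_phiM y]; exact hyA, ne_of_lt (boolePhiM_neg y)⟩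
  have h0 : volume (T ⁻¹' A) = volume (T ⁻¹' A \ {0}) :=
    (measure_diff_null (measure_singleton 0)).symm
  have hPmeas : MeasurableSet (boolePhiP '' A) := by
    have hc : Continuous boolePhiP := (boole_hasDerivAt_P · |>.differentiableAt)
      |> Differentiable.continuous
    exact (hc.measurableEmbedding boolePhiP_inj).measurableSet_image.2 hA
  have hdisj : Disjoint (boolePhiP '' A) (boolePhiM '' A) := by
    rw [Set.disjoint_left]
    rintro x ⟨y, _, rfl⟩ ⟨z, _, hz⟩
    have := boolePhiM_neg z
    have := boolePhiP_pos y
    linarith [hz ▸ this]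
  have hunion : volume (boolePhiP '' A ∪ boolePhiM '' A)
      = volume (boolePhiP '' A) + volume (boolePhiM '' A) := by
    rw [Set.union_comm]
    rw [measure_union hdisj.symm hPmeas]
    ring
  rw [h0, hset, hunion,
    boole_image_vol boole_hasDerivAt_P boolePhiP_inj hA,
    boole_image_vol boole_hasDerivAt_M boolePhiM_inj hA,
    ← MeasureTheory.lintegral_add_left ?_]
  swap
  · have hc : Continuous booleDP := by
      unfold booleDP
      exact ((continuous_const.add (continuous_id.div
        (Real.continuous_sqrt.comp (by continuity))
        (fun y => (boole_sqrt_pos y).ne'))).div_const 2)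
    exact hc.abs.measurable.ennreal_ofReal
  have : ∀ y, ENNReal.ofReal |booleDP y| + ENNReal.ofReal |booleDM y| = 1 := by
    intro y
    have hp := booleDP_pos y
    have hm := booleDM_pos y
    rw [abs_of_pos hp, abs_of_pos hm, ← ENNReal.ofReal_add hp.le hm.le]
    have hs := boole_sqrt_pos y
    have : booleDP y + booleDM y = 1 := by unfold booleDP booleDM; field_simp; ring
    rw [this, ENNReal.ofReal_one]
  simp only [this]
  rw [MeasureTheory.setLIntegral_one]
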